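/- Fix γ ≠ 0, V = ℂ^n, and suppose D(λ) = Σ_{i,j} d_{ij}(λ) e_{ii} ⊗ e_{jj} + Σ_{i≠j} Δ_{ij}(λ) e_{ij} ⊗ e_{ji} (zero-weight form) and B(λ) = Σ_i e_{ii} ⊗ b_i(λ). Then the Yang–Baxter-type consistency equation D_{12}(λ) B_{13}(λ) B_{23}(λ+h_1) = B_{23}(λ) B_{13}(λ+h_2) D_{12}(λ) on (ℂ^n)^{⊗3} holds if and only if d_{ij}(λ) · (b_i(λ) b_j(λ+γε_i) − b_j(λ) b_i(λ+γε_j)) = 0 for all i, j ∈ {1,…,n} and all λ. In particular, if d_{ij}(λ) ≠ 0 for all i, j, λ, the equation is equivalent to b_i(λ) b_j(λ+γε_i) = b_j(λ) b_i(λ+γε_j) for all i, j, λ. -/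

import Mathlib

open Matrix Kronecker BigOperators

/-- `γ ε_i` : the shift vector adding `γ` to the `i`-th dynamical coordinate. -/
def eps (n : ℕ) (γ : ℂ) (i : Fin n) : Fin n → ℂ := fun j => if j = i then γ else 0

/-- Embedding of a two-space matrix into legs 1,2 of `(ℂⁿ)^{⊗3}`. -/
def L12 {n : ℕ} (X : Matrix (Fin n × Fin n) (Fin n × Fin n) ℂ) :
    Matrix (Fin n × Fin n × Fin n) (Fin n × Fin n × Fin n) ℂ :=
  Matrix.of fun p q => X (p.1, p.2.1) (q.1, q.2.1) * (if p.2.2 = q.2.2 then 1 else 0)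

/-- Embedding of a two-space matrix into legs 1,3 of `(ℂⁿ)^{⊗3}`. -/
def L13 {n : ℕ} (X : Matrix (Fin n × Fin n) (Fin n × Fin n) ℂ) :
    Matrix (Fin n × Fin n × Fin n) (Fin n × Fin n × Fin n) ℂ :=
  Matrix.of fun p q => X (p.1, p.2.2) (q.1, q.2.2) * (if p.2.1 = q.2.1 then 1 else 0)

/-- Embedding of a two-space matrix into legs 2,3 of `(ℂⁿ)^{⊗3}`. -/
def L23 {n : ℕ} (X : Matrix (Fin n × Fin n) (Fin n × Fin n) ℂ) :
    Matrix (Fin n × Fin n × Fin n) (Fin n × Fin n × Fin n) ℂ :=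
  Matrix.of fun p q => X (p.2.1, p.2.2) (q.2.1, q.2.2) * (if p.1 = q.1 then 1 else 0)

/-- `X₁₂(λ+h₃)` : legs 1,2 with dynamical shift coupled to the diagonal of leg 3. -/
def sh12at3 {n : ℕ} (γ : ℂ)
    (X : (Fin n → ℂ) → Matrix (Fin n × Fin n) (Fin n × Fin n) ℂ) (l : Fin n → ℂ) :
    Matrix (Fin n × Fin n × Fin n) (Fin n × Fin n × Fin n) ℂ :=
  Matrix.of fun p q =>
    X (l + eps n γ p.2.2) (p.1, p.2.1) (q.1, q.2.1) * (if p.2.2 = q.2.2 then 1 else 0)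

/-- `X₁₃(λ+h₂)` : legs 1,3 with dynamical shift coupled to the diagonal of leg 2. -/
def sh13at2 {n : ℕ} (γ : ℂ)
    (X : (Fin n → ℂ) → Matrix (Fin n × Fin n) (Fin n × Fin n) ℂ) (l : Fin n → ℂ) :
    Matrix (Fin n × Fin n × Fin n) (Fin n × Fin n × Fin n) ℂ :=
  Matrix.of fun p q =>
    X (l + eps n γ p.2.1) (p.1, p.2.2) (q.1, q.2.2) * (if p.2.1 = q.2.1 then 1 else 0)

/-- `X₂₃(λ+h₁)` : legs 2,3 with dynamical shift coupled to the diagonal of leg 1. -/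
def sh23at1 {n : ℕ} (γ : ℂ)
    (X : (Fin n → ℂ) → Matrix (Fin n × Fin n) (Fin n × Fin n) ℂ) (l : Fin n → ℂ) :
    Matrix (Fin n × Fin n × Fin n) (Fin n × Fin n × Fin n) ℂ :=
  Matrix.of fun p q =>
    X (l + eps n γ p.1) (p.2.1, p.2.2) (q.2.1, q.2.2) * (if p.1 = q.1 then 1 else 0)


/-- `e_{ij}` matrix unit. -/
def Eu {n : ℕ} (i j : Fin n) : Matrix (Fin n) (Fin n) ℂ := Matrix.single i j 1

/-- Entry formula for `B = ∑ e_{ii} ⊗ b_i`. -/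
lemma Bentry' {n : ℕ} (M : Fin n → Matrix (Fin n) (Fin n) ℂ) (a c a' c' : Fin n) :
    (∑ i : Fin n, Eu i i ⊗ₖ M i) (a,c) (a',c') = if a = a' then M a c c' else 0 := by
  simp [Matrix.sum_apply, Eu, Matrix.single, ite_and]

/-- Entry formula for the zero-weight `D`. -/
lemma Dentry' {n : ℕ} (d Δ : Fin n → Fin n → ℂ) (a c a' c' : Fin n) :
    ((∑ i : Fin n, ∑ j : Fin n, d i j • (Eu i i ⊗ₖ Eu j j))
      + ∑ i : Fin n, ∑ j : Fin n, (if i ≠ j then Δ i j • (Eu i j ⊗ₖ Eu j i) else 0)) (a,c) (a',c')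
    = (if a = a' ∧ c = c' then d a c else 0)
      + (if a ≠ c ∧ a' = c ∧ c' = a then Δ a c else 0) := by
  simp only [Matrix.add_apply, Matrix.sum_apply]
  congr 1
  · simp [Eu, Matrix.single, ite_and, Finset.sum_ite_eq']
    by_cases h1 : a = a' <;> by_cases h2 : c = c' <;> simp [h1, h2]
  · have key : ∀ i j : Fin n, (if i ≠ j then Δ i j • (Eu i j ⊗ₖ Eu j i) else 0) (a,c) (a',c')
        = if i = a then (if j = c then (if a ≠ c ∧ a' = c ∧ c' = a then Δ a c else 0) else 0)
          else 0 := by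
      intro i j
      rcases eq_or_ne i j with hij | hij
      · rw [if_neg (by simpa using hij)]
        subst hij
        by_cases h1 : i = a <;> by_cases h2 : i = c <;> simp_all
      · rw [if_pos hij]
        simp only [Matrix.smul_apply, Matrix.kroneckerMap_apply, Eu, Matrix.single,
          Matrix.of_apply, smul_eq_mul]
        by_cases h1 : i = a <;> by_cases h2 : j = c <;> by_cases h3 : a' = c <;>
          by_cases h4 : c' = a <;> simp_all <;> aesop
    simp [key, Finset.sum_ite_eq']

/-- Entry of the left-hand side of the consistency equation. -/
lemma lhs_entry {n : ℕ} (γ : ℂ) (b : (Fin n → ℂ) → Fin n → Matrix (Fin n) (Fin n) ℂ)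
    (B : (Fin n → ℂ) → Matrix (Fin n × Fin n) (Fin n × Fin n) ℂ)
    (hBe : ∀ l (a c a' c' : Fin n), B l (a,c) (a',c') = if a = a' then b l a c c' else 0)
    (Dm : Matrix (Fin n × Fin n) (Fin n × Fin n) ℂ) (l : Fin n → ℂ)
    (p1 p2 p3 q1 q2 q3 : Fin n) :
    (L12 Dm * L13 (B l) * sh23at1 γ B l) (p1,p2,p3) (q1,q2,q3)
    = Dm (p1,p2) (q1,q2) * (b l q1 * b (l + eps n γ q1) q2) p3 q3 := by
  simp only [Matrix.mul_apply, L12, L13, sh23at1, Matrix.of_apply, hBe, Fintype.sum_prod_type]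
  simp [mul_ite, ite_mul, Finset.mul_sum, Finset.sum_mul, mul_assoc, mul_comm, mul_left_comm]

/-- Entry of the right-hand side of the consistency equation. -/
lemma rhs_entry {n : ℕ} (γ : ℂ) (b : (Fin n → ℂ) → Fin n → Matrix (Fin n) (Fin n) ℂ)
    (B : (Fin n → ℂ) → Matrix (Fin n × Fin n) (Fin n × Fin n) ℂ)
    (hBe : ∀ l (a c a' c' : Fin n), B l (a,c) (a',c') = if a = a' then b l a c c' else 0)
    (Dm : Matrix (Fin n × Fin n) (Fin n × Fin n) ℂ) (l : Fin n → ℂ)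
    (p1 p2 p3 q1 q2 q3 : Fin n) :
    (L23 (B l) * sh13at2 γ B l * L12 Dm) (p1,p2,p3) (q1,q2,q3)
    = (b l p2 * b (l + eps n γ p2) p1) p3 q3 * Dm (p1,p2) (q1,q2) := by
  simp only [Matrix.mul_apply, L23, L12, sh13at2, Matrix.of_apply, hBe, Fintype.sum_prod_type]
  simp [mul_ite, ite_mul, Finset.mul_sum, Finset.sum_mul, mul_assoc, mul_comm, mul_left_comm]

theorem stmt19 (n : ℕ) (γ : ℂ) (hγ : γ ≠ 0)
    (d Δ : (Fin n → ℂ) → Fin n → Fin n → ℂ)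
    (b : (Fin n → ℂ) → Fin n → Matrix (Fin n) (Fin n) ℂ)
    (D : (Fin n → ℂ) → Matrix (Fin n × Fin n) (Fin n × Fin n) ℂ)
    (hD : ∀ l, D l = (∑ i : Fin n, ∑ j : Fin n, d l i j • (Eu i i ⊗ₖ Eu j j))
        + ∑ i : Fin n, ∑ j : Fin n, (if i ≠ j then Δ l i j • (Eu i j ⊗ₖ Eu j i) else 0))
    (B : (Fin n → ℂ) → Matrix (Fin n × Fin n) (Fin n × Fin n) ℂ)
    (hB : ∀ l, B l = ∑ i : Fin n, Eu i i ⊗ₖ b l i) :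
    ((∀ l, L12 (D l) * L13 (B l) * sh23at1 γ B l
        = L23 (B l) * sh13at2 γ B l * L12 (D l)) ↔
      (∀ (i j : Fin n) (l : Fin n → ℂ),
        d l i j • (b l i * b (l + eps n γ i) j - b l j * b (l + eps n γ j) i) = 0)) ∧
    ((∀ (i j : Fin n) (l : Fin n → ℂ), d l i j ≠ 0) →
      ((∀ l, L12 (D l) * L13 (B l) * sh23at1 γ B l
          = L23 (B l) * sh13at2 γ B l * L12 (D l)) ↔
        (∀ (i j : Fin n) (l : Fin n → ℂ),
          b l i * b (l + eps n γ i) j = b l j * b (l + eps n γ j) i))) := by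
  have hBe : ∀ l (a c a' c' : Fin n), B l (a,c) (a',c') = if a = a' then b l a c c' else 0 := by
    intro l a c a' c'; rw [hB]; exact Bentry' _ a c a' c'
  have hDe : ∀ l (a c a' c' : Fin n), D l (a,c) (a',c')
      = (if a = a' ∧ c = c' then d l a c else 0)
        + (if a ≠ c ∧ a' = c ∧ c' = a then Δ l a c else 0) := by
    intro l a c a' c'; rw [hD]; exact Dentry' _ _ a c a' c'
  have main : (∀ l, L12 (D l) * L13 (B l) * sh23at1 γ B l
        = L23 (B l) * sh13at2 γ B l * L12 (D l)) ↔
      (∀ (i j : Fin n) (l : Fin n → ℂ),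
        d l i j • (b l i * b (l + eps n γ i) j - b l j * b (l + eps n γ j) i) = 0) := by
    constructor
    · intro H i j l
      ext p3 q3
      have h2 : (L12 (D l) * L13 (B l) * sh23at1 γ B l) (i,j,p3) (i,j,q3)
          = (L23 (B l) * sh13at2 γ B l * L12 (D l)) (i,j,p3) (i,j,q3) := by rw [H l]
      rw [lhs_entry γ b B hBe (D l) l, rhs_entry γ b B hBe (D l) l, hDe] at h2
      simp only [and_self, ite_true, Matrix.smul_apply, Matrix.sub_apply, Matrix.zero_apply,
        smul_eq_mul]
      have hfalse : ¬ (i ≠ j ∧ i = j ∧ j = i) := by tauto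
      rw [if_neg hfalse, add_zero, if_pos ⟨rfl, rfl⟩] at h2
      linear_combination h2
    · intro h l
      ext ⟨p1, p2, p3⟩ ⟨q1, q2, q3⟩
      rw [lhs_entry γ b B hBe (D l) l, rhs_entry γ b B hBe (D l) l, hDe]
      by_cases h1 : p1 = q1 ∧ p2 = q2
      · obtain ⟨rfl, rfl⟩ : p1 = q1 ∧ p2 = q2 := h1
        by_cases h2 : p1 ≠ p2 ∧ p1 = p2 ∧ p2 = p1
        · exact absurd h2.2.1 h2.1
        · have hsc := congrFun (congrFun (h p1 p2 l) p3) q3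
          simp only [Matrix.smul_apply, Matrix.sub_apply, Matrix.zero_apply, smul_eq_mul,
            mul_sub] at hsc
          rw [if_pos ⟨rfl, rfl⟩, if_neg h2, add_zero]
          linear_combination hsc
      · by_cases h2 : p1 ≠ p2 ∧ q1 = p2 ∧ q2 = p1
        · obtain ⟨hne, rfl, rfl⟩ := h2
          simp [h1, hne, mul_comm]
        · simp [h1, h2]
  refine ⟨main, fun hd => ?_⟩
  rw [main]
  constructor
  · intro h i j l
    rcases smul_eq_zero.mp (h i j l) with h' | h'
    · exact absurd h' (hd i j l)
    · exact sub_eq_zero.mp h'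
  · intro h i j l
    rw [h i j l]; simp
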